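/- For M = 2 and δ ∈ (0, 1/2), the two-step return probability J(δ) = (1/2 + δ)² + (1/2 - δ)² satisfies J(δ') > J(δ) where δ' = δ/(2(1/4 + δ²)), and lim over iterated application of the map δ ↦ δ/(2(1/4+δ²)) of J equals 1. -/
import Mathlib


open Filter Topology

theorem stmt_17 (J : ℝ → ℝ) (hJ : ∀ δ : ℝ, J δ = (1/2 + δ)^2 + (1/2 - δ)^2) :
    (∀ δ : ℝ, δ ∈ Set.Ioo (0:ℝ) (1/2) → J δ < J (δ / (2 * (1/4 + δ^2)))) ∧
    (∀ d : ℕ → ℝ, d 0 ∈ Set.Ioo (0:ℝ) (1/2) →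
      (∀ t : ℕ, d (t+1) = d t / (2 * (1/4 + (d t)^2))) →
      Tendsto (fun t : ℕ => J (d t)) atTop (𝓝 1)) := by
  have key : ∀ δ : ℝ, δ ∈ Set.Ioo (0:ℝ) (1/2) →
      δ < δ / (2 * (1/4 + δ^2)) ∧ δ / (2 * (1/4 + δ^2)) < 1/2 := by
    rintro δ ⟨h1, h2⟩
    have hd : (0:ℝ) < 2 * (1/4 + δ^2) := by positivity
    constructor
    · rw [lt_div_iff₀ hd]; nlinarith
    · rw [div_lt_iff₀ hd]; nlinarith
  constructor
  · intro δ hδ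
    obtain ⟨h1, h2⟩ := key δ hδ
    have h0 := hδ.1
    rw [hJ, hJ]
    nlinarith [mul_pos (by linarith : (0:ℝ) < δ / (2 * (1/4 + δ^2)) + δ)
      (by linarith : (0:ℝ) < δ / (2 * (1/4 + δ^2)) - δ)]
  · intro d hd0 hrec
    obtain ⟨hd0pos, hd0lt⟩ := hd0
    set r : ℝ := 1 / (1 + 4 * (d 0)^2) with hrdef
    have hb : (0:ℝ) < 1 + 4 * (d 0)^2 := by positivity
    have hr0 : 0 ≤ r := by positivity
    have hr1 : r < 1 := by
      rw [hrdef, div_lt_one hb]; nlinarith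
    -- invariant
    have inv : ∀ t, d 0 ≤ d t ∧ d t ∈ Set.Ioo (0:ℝ) (1/2) := by
      intro t
      induction t with
      | zero => exact ⟨le_refl _, ⟨hd0pos, hd0lt⟩⟩
      | succ n ih =>
        obtain ⟨hle, hmem⟩ := ih
        obtain ⟨hlt, hlt2⟩ := key (d n) hmem
        rw [hrec n]
        exact ⟨le_trans hle hlt.le, ⟨lt_trans hmem.1 hlt, hlt2⟩⟩
    -- contraction
    have decay : ∀ t, 1/2 - d (t+1) ≤ r * (1/2 - d t) := by
      intro t
      obtain ⟨hle, h1, h2⟩ := inv t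
      set δ := d t
      have ha : (0:ℝ) < 2 * (1/4 + δ^2) := by positivity
      have heq : 1/2 - δ / (2 * (1/4 + δ^2)) = (1/2 - δ)^2 / (2 * (1/4 + δ^2)) := by
        field_simp; ring
      have ha' : (0:ℝ) ≤ 1/2 - δ := by linarith
      have h4 : (d 0)^2 ≤ δ^2 := by nlinarith
      rw [hrec t, heq, hrdef, div_mul_eq_mul_div, one_mul, div_le_div_iff₀ ha hb]
      nlinarith [mul_nonneg (mul_nonneg ha' h1.le) (by positivity : (0:ℝ) ≤ 1 + 4*δ^2),
        mul_nonneg (sq_nonneg (1/2 - δ)) (by linarith : (0:ℝ) ≤ δ^2 - (d 0)^2)]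
    have bound : ∀ t, 1/2 - d t ≤ (1/2 - d 0) * r ^ t := by
      intro t
      induction t with
      | zero => simp
      | succ n ih =>
        calc 1/2 - d (n+1) ≤ r * (1/2 - d n) := decay n
          _ ≤ r * ((1/2 - d 0) * r ^ n) := by
              apply mul_le_mul_of_nonneg_left ih hr0
          _ = (1/2 - d 0) * r ^ (n+1) := by ring
    have h0le : ∀ t, 0 ≤ 1/2 - d t := fun t => by linarith [(inv t).2.2]
    have htend0 : Tendsto (fun t : ℕ => 1/2 - d t) atTop (𝓝 0) := by
      apply squeeze_zero h0le bound
      have := tendsto_pow_atTop_nhds_zero_of_lt_one hr0 hr1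
      simpa using this.const_mul (1/2 - d 0)
    have htendd : Tendsto d atTop (𝓝 (1/2)) := by
      have := htend0.const_sub (1/2 : ℝ)
      simpa using this
    have : Tendsto (fun t : ℕ => (1/2 + d t)^2 + (1/2 - d t)^2) atTop
        (𝓝 ((1/2 + 1/2)^2 + (1/2 - 1/2)^2)) := by
      exact (((tendsto_const_nhds.add htendd).pow 2).add
        ((tendsto_const_nhds.sub htendd).pow 2))
    simp only [hJ]
    convert this using 2
    norm_num
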